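/- Let X be a (75,32,10,16) strongly regular graph with a 4-clique K whose outside-degree distribution is (b_0,b_1,b_2,b_3)=(2,23,45,1) with b_4=0. Let x0, x1 be the two vertices with 0 neighbors in K and x3 the unique vertex with 3 neighbors in K. Then x3 is adjacent to both x0 and x1. -/

import Mathlib

open Finset

/-- The number of neighbors of `x` inside the vertex set `K`. -/
def nbrs {V : Type*} [DecidableEq V] (G : SimpleGraph V) [DecidableRel G.Adj]
    (K : Finset V) (x : V) : ℕ :=
  (K.filter (fun y => G.Adj x y)).card

/-- The number of vertices outside `K` with exactly `i` neighbors in `K`. -/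
def bcount {V : Type*} [Fintype V] [DecidableEq V] (G : SimpleGraph V) [DecidableRel G.Adj]
    (K : Finset V) (i : ℕ) : ℕ :=
  ((univ \ K).filter (fun x => nbrs G K x = i)).card

section Aux

variable {V : Type*} [Fintype V] [DecidableEq V]
    (G : SimpleGraph V) [DecidableRel G.Adj]

lemma card_common (v w : V) :
    Fintype.card (G.commonNeighbors v w)
      = (G.neighborFinset v ∩ G.neighborFinset w).card := by
  rw [← Set.toFinset_card]
  congr 1
  ext y
  rw [Set.mem_toFinset]
  simp [SimpleGraph.commonNeighbors]

variable {G}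

/-- Double counting: the sum of `nbrs` over neighbors of a vertex `x` with no
neighbors in the 4-clique `K`. -/
lemma sum_nbrs_eq (hG : G.IsSRGWith 75 32 10 16)
    {K : Finset V} (hK : G.IsNClique 4 K) {x : V} (hxK : x ∉ K)
    (hx : nbrs G K x = 0) :
    ∑ y ∈ G.neighborFinset x, nbrs G K y = 64 := by
  have hno : ∀ k ∈ K, ¬ G.Adj x k := by
    intro k hk hadj
    have : k ∈ K.filter (fun y => G.Adj x y) := by simp [hk, hadj]
    rw [nbrs, Finset.card_eq_zero] at hx
    simp [hx] at this
  have hswap : ∑ y ∈ G.neighborFinset x, nbrs G K y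
      = ∑ k ∈ K, (G.neighborFinset x ∩ G.neighborFinset k).card := by
    have step1 : ∑ y ∈ G.neighborFinset x, nbrs G K y
        = ∑ y ∈ G.neighborFinset x, ∑ k ∈ K, (if G.Adj y k then 1 else 0) := by
      refine Finset.sum_congr rfl fun y _ => ?_
      rw [nbrs, Finset.card_filter]
    rw [step1, Finset.sum_comm]
    refine Finset.sum_congr rfl fun k hk => ?_
    rw [← Finset.card_filter]
    congr 1
    ext y
    simp only [Finset.mem_filter, Finset.mem_inter, SimpleGraph.mem_neighborFinset]
    constructor
    · rintro ⟨h1, h2⟩; exact ⟨h1, h2.symm⟩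
    · rintro ⟨h1, h2⟩; exact ⟨h1, h2.symm⟩
  rw [hswap]
  have : ∀ k ∈ K, (G.neighborFinset x ∩ G.neighborFinset k).card = 16 := by
    intro k hk
    rw [← card_common]
    exact hG.of_not_adj (by rintro rfl; exact hxK hk) (hno k hk)
  rw [Finset.sum_congr rfl this, Finset.sum_const, hK.2, smul_eq_mul]

/-- Key one-sided lemma. -/
lemma key (hG : G.IsSRGWith 75 32 10 16)
    {K : Finset V} (hK : G.IsNClique 4 K)
    (hb0 : bcount G K 0 = 2)
    (hb2 : bcount G K 2 = 45) (hb3 : bcount G K 3 = 1) (hb4 : bcount G K 4 = 0)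
    {x0 x1 x3 : V} (hne : x0 ≠ x1)
    (hx0K : x0 ∉ K) (hx0 : nbrs G K x0 = 0)
    (hx1K : x1 ∉ K) (hx1 : nbrs G K x1 = 0)
    (hx3K : x3 ∉ K) (hx3 : nbrs G K x3 = 3)
    (hnadj : ¬ G.Adj x0 x1) :
    G.Adj x3 x0 := by
  by_contra hadj
  -- basic facts about the b-counts
  have hKnotmem : ∀ y : V, y ∉ K → y ∈ univ \ K := fun y hy => by simp [hy]
  have hNK : ∀ y : V, y ∉ K → nbrs G K y ≤ 3 := by
    intro y hy
    have h4 : nbrs G K y ≤ 4 := by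
      rw [← hK.2]; exact Finset.card_filter_le _ _
    rcases Nat.lt_or_ge (nbrs G K y) 4 with h | h
    · omega
    · exfalso
      have : y ∈ (univ \ K).filter (fun x => nbrs G K x = 4) := by
        simp [hy]; omega
      rw [bcount, Finset.card_eq_zero] at hb4
      simp [hb4] at this
  -- the b3 set is {x3}
  have hB3 : ∀ y : V, y ∉ K → nbrs G K y = 3 → y = x3 := by
    intro y hy h3
    have hmemy : y ∈ (univ \ K).filter (fun x => nbrs G K x = 3) := by simp [hy, h3]
    have hmem3 : x3 ∈ (univ \ K).filter (fun x => nbrs G K x = 3) := by simp [hx3K, hx3]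
    rw [bcount, Finset.card_eq_one] at hb3
    obtain ⟨a, ha⟩ := hb3
    rw [ha, Finset.mem_singleton] at hmemy hmem3
    rw [hmemy, hmem3]
  -- the b0 set is {x0, x1}
  have hB0 : ∀ y : V, y ∉ K → nbrs G K y = 0 → y = x0 ∨ y = x1 := by
    intro y hy h0
    have hsub : ({x0, x1} : Finset V) ⊆ (univ \ K).filter (fun x => nbrs G K x = 0) := by
      intro z hz
      simp only [Finset.mem_insert, Finset.mem_singleton] at hz
      rcases hz with rfl | rfl
      · simp [hx0K, hx0]
      · simp [hx1K, hx1]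
    have h2 : ({x0, x1} : Finset V).card = 2 := by
      rw [Finset.card_insert_of_notMem (by simpa using hne), Finset.card_singleton]
    have := Finset.eq_of_subset_of_card_le hsub (by rw [h2]; exact le_of_eq hb0)
    have hmemy : y ∈ (univ \ K).filter (fun x => nbrs G K x = 0) := by simp [hy, h0]
    rw [← this] at hmemy
    simpa using hmemy
  -- neighbors of x0 or x1 are not in K
  have hnbrK : ∀ x : V, nbrs G K x = 0 → ∀ y ∈ G.neighborFinset x, y ∉ K := by
    intro x hx y hy hyK
    rw [SimpleGraph.mem_neighborFinset] at hy
    have : y ∈ K.filter (fun z => G.Adj x z) := by simp [hyK, hy]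
    rw [nbrs, Finset.card_eq_zero] at hx
    simp [hx] at this
  -- degree facts
  have hdeg0 : (G.neighborFinset x0).card = 32 := hG.regular x0
  have hdeg1 : (G.neighborFinset x1).card = 32 := hG.regular x1
  -- every neighbor of x0 has nbrs = 2
  have hsum0 := sum_nbrs_eq hG hK hx0K hx0
  have hub0 : ∀ y ∈ G.neighborFinset x0, nbrs G K y ≤ 2 := by
    intro y hy
    have hyK := hnbrK x0 hx0 y hy
    have h3 := hNK y hyK
    rcases Nat.lt_or_ge (nbrs G K y) 3 with h | h
    · omega
    · exfalso
      have : y = x3 := hB3 y hyK (by omega)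
      subst this
      rw [SimpleGraph.mem_neighborFinset] at hy
      exact hadj hy.symm
  have hall2 : ∀ y ∈ G.neighborFinset x0, nbrs G K y = 2 := by
    intro y hy
    by_contra hy2
    have h1 : nbrs G K y ≤ 1 := by have := hub0 y hy; omega
    have := Finset.sum_le_card_nsmul ((G.neighborFinset x0).erase y)
      (fun z => nbrs G K z) 2 (fun z hz => hub0 z (Finset.mem_of_mem_erase hz))
    rw [Finset.card_erase_of_mem hy, hdeg0] at this
    simp only [smul_eq_mul] at this
    have hsplit : ∑ z ∈ G.neighborFinset x0, nbrs G K z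
        = nbrs G K y + ∑ z ∈ (G.neighborFinset x0).erase y, nbrs G K z :=
      (Finset.add_sum_erase _ _ hy).symm
    omega
  -- N(x0) ⊆ B2
  set B2 := (univ \ K).filter (fun x => nbrs G K x = 2) with hB2def
  have hB2card : B2.card = 45 := hb2
  have hsub0 : G.neighborFinset x0 ⊆ B2 := by
    intro y hy
    simp only [hB2def, Finset.mem_filter, Finset.mem_sdiff, Finset.mem_univ, true_and]
    exact ⟨hnbrK x0 hx0 y hy, hall2 y hy⟩
  -- at least 30 neighbors of x1 are in B2
  set S1 := (G.neighborFinset x1).filter (fun y => nbrs G K y = 2) with hS1def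
  have hsum1 := sum_nbrs_eq hG hK hx1K hx1
  have hS1card : 30 ≤ S1.card := by
    set T := (G.neighborFinset x1).filter (fun y => nbrs G K y ≠ 2) with hTdef
    have hpart : S1.card + T.card = 32 := by
      rw [hS1def, hTdef, Finset.card_filter_add_card_filter_not, hdeg1]
    have hsplit : ∑ y ∈ G.neighborFinset x1, nbrs G K y
        = ∑ y ∈ S1, nbrs G K y + ∑ y ∈ T, nbrs G K y := by
      rw [hS1def, hTdef, Finset.sum_filter_add_sum_filter_not]
    have hS1sum : ∑ y ∈ S1, nbrs G K y = 2 * S1.card := by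
      rw [Finset.sum_congr rfl (fun y hy => (Finset.mem_filter.mp hy).2),
        Finset.sum_const, smul_eq_mul, Nat.mul_comm]
    -- vertices in T with nbrs = 3 form a subset of {x3}
    have hT3 : (T.filter (fun y => nbrs G K y = 3)).card ≤ 1 := by
      have : T.filter (fun y => nbrs G K y = 3) ⊆ {x3} := by
        intro y hy
        simp only [hTdef, Finset.mem_filter] at hy
        have hyK := hnbrK x1 hx1 y hy.1.1
        simp [hB3 y hyK hy.2]
      simpa using Finset.card_le_card this
    have hTsum : ∑ y ∈ T, nbrs G K y ≤ T.card + 2 := by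
      have hsplitT : ∑ y ∈ T, nbrs G K y
          = ∑ y ∈ T.filter (fun y => nbrs G K y = 3), nbrs G K y
            + ∑ y ∈ T.filter (fun y => ¬ nbrs G K y = 3), nbrs G K y := by
        rw [Finset.sum_filter_add_sum_filter_not]
      have h3sum : ∑ y ∈ T.filter (fun y => nbrs G K y = 3), nbrs G K y
          ≤ 3 * (T.filter (fun y => nbrs G K y = 3)).card := by
        rw [Finset.sum_congr rfl (fun y hy => (Finset.mem_filter.mp hy).2),
          Finset.sum_const, smul_eq_mul, Nat.mul_comm]
      have hrest : ∀ y ∈ T.filter (fun y => ¬ nbrs G K y = 3), nbrs G K y ≤ 1 := by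
        intro y hy
        simp only [hTdef, Finset.mem_filter] at hy
        have := hNK y (hnbrK x1 hx1 y hy.1.1)
        omega
      have hrsum := Finset.sum_le_card_nsmul _ (fun y => nbrs G K y) 1 hrest
      have hTc : (T.filter (fun y => nbrs G K y = 3)).card
          + (T.filter (fun y => ¬ nbrs G K y = 3)).card = T.card := by
        rw [Finset.card_filter_add_card_filter_not]
      simp only [smul_eq_mul, Nat.mul_one] at hrsum
      omega
    omega
  -- S1 ⊆ B2
  have hsub1 : S1 ⊆ B2 := by
    intro y hy
    simp only [hS1def, Finset.mem_filter] at hy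
    simp only [hB2def, Finset.mem_filter, Finset.mem_sdiff, Finset.mem_univ, true_and]
    exact ⟨hnbrK x1 hx1 y hy.1, hy.2⟩
  -- the intersection is inside common neighbors of x0 and x1
  have hintcard : (G.neighborFinset x0 ∩ S1).card ≤ 16 := by
    have hsubc : G.neighborFinset x0 ∩ S1 ⊆ G.neighborFinset x0 ∩ G.neighborFinset x1 := by
      intro y hy
      rw [Finset.mem_inter] at hy ⊢
      refine ⟨hy.1, ?_⟩
      have := hy.2
      simp only [hS1def, Finset.mem_filter] at this
      exact this.1
    have h16 : (G.neighborFinset x0 ∩ G.neighborFinset x1).card = 16 := by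
      rw [← card_common]
      exact hG.of_not_adj hne hnadj
    calc (G.neighborFinset x0 ∩ S1).card ≤ _ := Finset.card_le_card hsubc
      _ = 16 := h16
  -- final contradiction
  have hunion : (G.neighborFinset x0 ∪ S1) ⊆ B2 := Finset.union_subset hsub0 hsub1
  have hucard := Finset.card_le_card hunion
  have hui := Finset.card_union_add_card_inter (G.neighborFinset x0) S1
  omega

end Aux

/-- Case (2,23,45,1): the unique vertex `x3` with 3 neighbors in the 4-clique `K`
is adjacent to both vertices `x0, x1` having no neighbor in `K` (given that
`x0` and `x1` are not adjacent). -/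
theorem stmt7 {V : Type*} [Fintype V] [DecidableEq V]
    (G : SimpleGraph V) [DecidableRel G.Adj]
    (hG : G.IsSRGWith 75 32 10 16)
    (K : Finset V) (hK : G.IsNClique 4 K)
    (hb0 : bcount G K 0 = 2) (hb1 : bcount G K 1 = 23)
    (hb2 : bcount G K 2 = 45) (hb3 : bcount G K 3 = 1) (hb4 : bcount G K 4 = 0)
    (x0 x1 x3 : V) (hne : x0 ≠ x1)
    (hx0K : x0 ∉ K) (hx0 : nbrs G K x0 = 0)
    (hx1K : x1 ∉ K) (hx1 : nbrs G K x1 = 0)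
    (hx3K : x3 ∉ K) (hx3 : nbrs G K x3 = 3)
    (hnadj : ¬ G.Adj x0 x1) :
    G.Adj x3 x0 ∧ G.Adj x3 x1 := by
  constructor
  · exact key hG hK hb0 hb2 hb3 hb4 hne hx0K hx0 hx1K hx1 hx3K hx3 hnadj
  · exact key hG hK hb0 hb2 hb3 hb4 hne.symm hx1K hx1 hx0K hx0 hx3K hx3
      (fun h => hnadj h.symm)
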